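/- Let G be a connected simple graph on a finite vertex type V and let w : Sym2 V → ℝ be an edge-weight function that is injective on the edge set of G. Let T be a maximum-weight spanning tree of G, i.e., a connected acyclic spanning subgraph T ≤ G maximizing the total weight ∑_{e ∈ E(T)} w(e) among all spanning trees of G. Then for every edge e ∈ E(G) with endpoints u and v, e ∈ E(T) if and only if u and v lie in different connected components of the spanning subgraph G_{> w(e)} of G whose edge set is { f ∈ E(G) : w(f) > w(e) }. -/

import Mathlib

open SimpleGraph

section Aux

variable {V : Type*}

private lemma reach_or_aux {T : SimpleGraph V} {a b : V} {x z : V} (p : T.Walk x z) :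
    (T \ SimpleGraph.fromEdgeSet {s(a, b)}).Reachable x z ∨
    ((T \ SimpleGraph.fromEdgeSet {s(a, b)}).Reachable x a ∧
      (T \ SimpleGraph.fromEdgeSet {s(a, b)}).Reachable b z) ∨
    ((T \ SimpleGraph.fromEdgeSet {s(a, b)}).Reachable x b ∧
      (T \ SimpleGraph.fromEdgeSet {s(a, b)}).Reachable a z) := by
  induction p with
  | nil => exact Or.inl (Reachable.refl _)
  | @cons x y z h q ih =>
    by_cases hxy : s(x, y) = s(a, b)
    · rw [Sym2.eq_iff] at hxy
      rcases hxy with ⟨rfl, rfl⟩ | ⟨rfl, rfl⟩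
      · rcases ih with h1 | ⟨h1, h2⟩ | ⟨h1, h2⟩
        · exact Or.inr (Or.inl ⟨Reachable.refl _, h1⟩)
        · exact Or.inr (Or.inl ⟨Reachable.refl _, h2⟩)
        · exact Or.inl h2
      · rcases ih with h1 | ⟨h1, h2⟩ | ⟨h1, h2⟩
        · exact Or.inr (Or.inr ⟨Reachable.refl _, h1⟩)
        · exact Or.inl h2
        · exact Or.inr (Or.inr ⟨Reachable.refl _, h2⟩)
    · have hadj : (T \ SimpleGraph.fromEdgeSet {s(a, b)}).Adj x y := by
        rw [sdiff_adj, fromEdgeSet_adj]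
        exact ⟨h, fun hc => hxy hc.1⟩
      rcases ih with h1 | ⟨h1, h2⟩ | ⟨h1, h2⟩
      · exact Or.inl (hadj.reachable.trans h1)
      · exact Or.inr (Or.inl ⟨hadj.reachable.trans h1, h2⟩)
      · exact Or.inr (Or.inr ⟨hadj.reachable.trans h1, h2⟩)

private lemma reach_or {T : SimpleGraph V} (hTconn : T.Connected) (a b x : V) :
    (T \ SimpleGraph.fromEdgeSet {s(a, b)}).Reachable x a ∨
      (T \ SimpleGraph.fromEdgeSet {s(a, b)}).Reachable x b := by
  rcases reach_or_aux (b := b) (hTconn x a).some with h | ⟨h1, _⟩ | ⟨h1, _⟩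
  · exact Or.inl h
  · exact Or.inl h1
  · exact Or.inr h1

private lemma exchange_connected {T : SimpleGraph V} (hTconn : T.Connected)
    {a b c d : V} (hcd : c ≠ d)
    (hca : (T \ SimpleGraph.fromEdgeSet {s(a, b)}).Reachable c a)
    (hdb : (T \ SimpleGraph.fromEdgeSet {s(a, b)}).Reachable d b) :
    ((T \ SimpleGraph.fromEdgeSet {s(a, b)}) ⊔ SimpleGraph.fromEdgeSet {s(c, d)}).Connected := by
  set T' := T \ SimpleGraph.fromEdgeSet {s(a, b)} with hT'
  set T'' := T' ⊔ SimpleGraph.fromEdgeSet {s(c, d)} with hT''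
  have hle : T' ≤ T'' := le_sup_left
  have hcd'' : T''.Adj c d := by
    rw [hT'', sup_adj, fromEdgeSet_adj]
    exact Or.inr ⟨rfl, hcd⟩
  have hba : T''.Reachable b a :=
    (((hdb.mono hle).symm.trans hcd''.symm.reachable).trans (hca.mono hle))
  have key : ∀ x, T''.Reachable x a := by
    intro x
    rcases reach_or hTconn a b x with h | h
    · exact h.mono hle
    · exact (h.mono hle).trans hba
  haveI : Nonempty V := hTconn.nonempty
  exact ⟨fun x y => (key x).trans (key y).symm⟩

private lemma exchange_acyclic {T : SimpleGraph V} (hTacyc : T.IsAcyclic)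
    {a b c d : V}
    (hncd : ¬ (T \ SimpleGraph.fromEdgeSet {s(a, b)}).Reachable c d) :
    ((T \ SimpleGraph.fromEdgeSet {s(a, b)}) ⊔ SimpleGraph.fromEdgeSet {s(c, d)}).IsAcyclic := by
  set T' := T \ SimpleGraph.fromEdgeSet {s(a, b)} with hT'
  intro x p hp
  by_cases hf : s(c, d) ∈ p.edges
  · have hAdjReach := (adj_and_reachable_delete_edges_iff_exists_cycle
      (G := T' ⊔ SimpleGraph.fromEdgeSet {s(c, d)})).mpr ⟨x, p, hp, hf⟩
    apply hncd
    refine hAdjReach.2.mono ?_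
    intro z y hzy
    rw [deleteEdges_adj, sup_adj] at hzy
    rcases hzy.1 with h | h
    · exact h
    · rw [fromEdgeSet_adj] at h
      exact absurd h.1 hzy.2
  · have hsub : ∀ e ∈ p.edges, e ∈ T'.edgeSet := by
      intro e he
      have h1 := p.edges_subset_edgeSet he
      rw [edgeSet_sup, edgeSet_fromEdgeSet] at h1
      rcases h1 with h1 | h1
      · exact h1
      · exact absurd (h1.1 ▸ he) hf
    have hsub' : ∀ e ∈ p.edges, e ∈ T.edgeSet := by
      intro e he
      have := hsub e he
      rw [hT', edgeSet_sdiff] at this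
      exact this.1
    exact hTacyc (p.transfer T hsub') (hp.transfer hsub')

private lemma edgeSet_exchange {T : SimpleGraph V} {a b c d : V} (hab : T.Adj a b) (hcd : c ≠ d) :
    ((T \ SimpleGraph.fromEdgeSet {s(a, b)}) ⊔ SimpleGraph.fromEdgeSet {s(c, d)}).edgeSet
      = (T.edgeSet \ {s(a, b)}) ∪ {s(c, d)} := by
  have h2 : ({s(c, d)} : Set (Sym2 V)) \ Sym2.diagSet = {s(c, d)} := by
    ext z
    simp only [Set.mem_diff, Set.mem_singleton_iff, Sym2.mem_diagSet]
    constructor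
    · exact And.left
    · rintro rfl
      exact ⟨rfl, by simp [Sym2.mk_isDiag_iff, hcd]⟩
  rw [edgeSet_sup, edgeSet_sdiff, edgeSet_fromEdgeSet, edgeSet_sdiff_sdiff_isDiag,
    edgeSet_fromEdgeSet, h2]

private lemma sum_exchange [Fintype V] (w : Sym2 V → ℝ) {T T'' : SimpleGraph V} {e f : Sym2 V}
    (hset : T''.edgeSet = (T.edgeSet \ {e}) ∪ {f})
    (he : e ∈ T.edgeSet) (hf : f ∉ T.edgeSet) :
    ∑ᶠ x ∈ T''.edgeSet, w x = (∑ᶠ x ∈ T.edgeSet, w x) - w e + w f := by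
  classical
  have hfin : T.edgeSet.Finite := Set.toFinite _
  have hfin'' : T''.edgeSet.Finite := Set.toFinite _
  rw [finsum_mem_eq_finite_toFinset_sum _ hfin, finsum_mem_eq_finite_toFinset_sum _ hfin'']
  have h1 : hfin''.toFinset = insert f (hfin.toFinset.erase e) := by
    ext z
    simp only [Set.Finite.mem_toFinset, hset, Set.mem_union, Set.mem_diff,
      Set.mem_singleton_iff, Finset.mem_insert, Finset.mem_erase]
    tauto
  have hfe : f ∉ hfin.toFinset.erase e := by
    simp only [Finset.mem_erase, Set.Finite.mem_toFinset]
    exact fun h => hf h.2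
  have he' : e ∈ hfin.toFinset := by
    simp only [Set.Finite.mem_toFinset]; exact he
  have hsplit : ∑ i ∈ hfin.toFinset, w i = w e + ∑ x ∈ hfin.toFinset.erase e, w x :=
    (Finset.add_sum_erase _ w he').symm
  rw [h1, Finset.sum_insert hfe, hsplit]
  ring

private lemma not_reachable_delete_of_mem_path_edges {T : SimpleGraph V} (hTacyc : T.IsAcyclic)
    {u v : V} {p : T.Walk u v} (hp : p.IsPath) {f : Sym2 V} (hf : f ∈ p.edges) :
    ¬ (T \ SimpleGraph.fromEdgeSet {f}).Reachable u v := by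
  classical
  rintro ⟨q⟩
  set q' : T.Walk u v :=
    (q.map (SimpleGraph.Hom.ofLE sdiff_le)).copy rfl rfl with hq'
  have hq'e : f ∉ q'.edges := by
    intro hmem
    rw [hq', SimpleGraph.Walk.edges_copy, SimpleGraph.Walk.edges_map] at hmem
    obtain ⟨e', he', heq⟩ := List.mem_map.mp hmem
    have he'f : e' = f := by
      simpa [SimpleGraph.Hom.ofLE_apply, Sym2.map_id'] using heq
    subst he'f
    have h1 := q.edges_subset_edgeSet he'
    rw [edgeSet_sdiff, edgeSet_fromEdgeSet] at h1
    exact h1.2 ⟨rfl, fun hd => (T.not_isDiag_of_mem_edgeSet h1.1) hd⟩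
  have hpath : (q'.toPath : T.Walk u v) = p :=
    congrArg Subtype.val (hTacyc.path_unique q'.toPath ⟨p, hp⟩)
  exact hq'e (SimpleGraph.Walk.edges_toPath_subset q' (hpath ▸ hf))

private lemma improve [Fintype V] {G T : SimpleGraph V} (hTG : T ≤ G) (hTconn : T.Connected)
    (hTacyc : T.IsAcyclic) (w : Sym2 V → ℝ) {u v x y : V} (huv : G.Adj u v)
    (hxy : T.Adj x y) (hT : s(u, v) ∉ T.edgeSet)
    (hwlt : w s(x, y) < w s(u, v))
    (hnot : ¬ (T \ SimpleGraph.fromEdgeSet {s(x, y)}).Reachable u v)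
    (hux : (T \ SimpleGraph.fromEdgeSet {s(x, y)}).Reachable u x)
    (hvy : (T \ SimpleGraph.fromEdgeSet {s(x, y)}).Reachable v y) :
    ∃ T' : SimpleGraph V, T' ≤ G ∧ T'.Connected ∧ T'.IsAcyclic ∧
      (∑ᶠ e ∈ T.edgeSet, w e) < ∑ᶠ e ∈ T'.edgeSet, w e := by
  refine ⟨(T \ SimpleGraph.fromEdgeSet {s(x, y)}) ⊔ SimpleGraph.fromEdgeSet {s(u, v)}, ?_,
    exchange_connected hTconn huv.ne hux hvy, exchange_acyclic hTacyc hnot, ?_⟩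
  · apply sup_le (le_trans sdiff_le hTG)
    intro a b hab
    rw [fromEdgeSet_adj, Set.mem_singleton_iff] at hab
    rw [← SimpleGraph.mem_edgeSet, hab.1]
    exact (SimpleGraph.mem_edgeSet G).mpr huv
  · rw [sum_exchange w (edgeSet_exchange hxy huv.ne) ((SimpleGraph.mem_edgeSet T).mpr hxy) hT]
    linarith

end Aux

/-- Cut characterization of the maximum-weight spanning tree: if `T` is a spanning tree of a
connected graph `G` maximizing the total edge weight for a weight function `w` injective on
`E(G)`, then an edge `s(u,v)` of `G` belongs to `T` if and only if `u` and `v` lie in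
different connected components of the spanning subgraph of `G` whose edges are those of
weight strictly greater than `w s(u,v)`. -/
theorem max_spanning_tree_cut_characterization (V : Type*) [Fintype V]
    (G : SimpleGraph V) (hG : G.Connected)
    (w : Sym2 V → ℝ) (hw : Set.InjOn w G.edgeSet)
    (T : SimpleGraph V) (hTG : T ≤ G) (hTconn : T.Connected) (hTacyc : T.IsAcyclic)
    (hmax : ∀ T' : SimpleGraph V, T' ≤ G → T'.Connected → T'.IsAcyclic →
      ∑ᶠ e ∈ T'.edgeSet, w e ≤ ∑ᶠ e ∈ T.edgeSet, w e)
    (u v : V) (huv : G.Adj u v) :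
    s(u, v) ∈ T.edgeSet ↔
      ¬ (SimpleGraph.fromEdgeSet {f | f ∈ G.edgeSet ∧ w s(u, v) < w f}).Reachable u v := by
  classical
  constructor
  · -- forward: e ∈ T and H-reachability give a contradiction
    intro heT hr
    have hTadj : T.Adj u v := (SimpleGraph.mem_edgeSet T).mp heT
    have hbridge : ¬ (T \ SimpleGraph.fromEdgeSet {s(u, v)}).Reachable u v :=
      (SimpleGraph.isBridge_iff.mp (isAcyclic_iff_forall_adj_isBridge.mp hTacyc hTadj))
    obtain ⟨p⟩ := hr
    obtain ⟨dd, _, hd1, hd2⟩ := p.exists_boundary_dart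
      {z | (T \ SimpleGraph.fromEdgeSet {s(u, v)}).Reachable u z}
      (SimpleGraph.Reachable.refl u) hbridge
    have hHadj := dd.adj
    rw [fromEdgeSet_adj] at hHadj
    obtain ⟨⟨hfG, hfw⟩, hcd⟩ := hHadj
    have hd1' : (T \ SimpleGraph.fromEdgeSet {s(u, v)}).Reachable u dd.fst := hd1
    have hd2' : ¬ (T \ SimpleGraph.fromEdgeSet {s(u, v)}).Reachable u dd.snd := hd2
    have hncd : ¬ (T \ SimpleGraph.fromEdgeSet {s(u, v)}).Reachable dd.fst dd.snd :=
      fun h => hd2' (hd1'.trans h)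
    have hfT : s(dd.fst, dd.snd) ∉ T.edgeSet := by
      intro hmem
      apply hncd
      refine SimpleGraph.Adj.reachable ?_
      rw [sdiff_adj, fromEdgeSet_adj]
      refine ⟨(SimpleGraph.mem_edgeSet T).mp hmem, ?_⟩
      rintro ⟨h1, -⟩
      rw [Set.mem_singleton_iff] at h1
      rw [h1] at hfw
      exact lt_irrefl _ hfw
    have hdv : (T \ SimpleGraph.fromEdgeSet {s(u, v)}).Reachable dd.snd v := by
      rcases reach_or hTconn u v dd.snd with h | h
      · exact absurd h.symm hd2'
      · exact h
    obtain ⟨T'', h1, h2, h3, h4⟩ := improve hTG hTconn hTacyc w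
      ((SimpleGraph.mem_edgeSet G).mp hfG) hTadj hfT hfw hncd hd1'.symm hdv
    exact absurd (hmax T'' h1 h2 h3) (not_le.mpr h4)
  · -- backward
    intro hnr
    by_contra heT
    obtain ⟨p0⟩ := hTconn u v
    have hp : p0.toPath.val.IsPath := p0.toPath.2
    set p : T.Walk u v := p0.toPath.val with hpdef
    have hbad : ¬ ∀ f ∈ p.edges, w s(u, v) < w f := by
      intro hall
      apply hnr
      refine ⟨p.transfer _ ?_⟩
      intro f hf
      have hfT : f ∈ T.edgeSet := p.edges_subset_edgeSet hf
      rw [edgeSet_fromEdgeSet]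
      exact ⟨⟨SimpleGraph.edgeSet_mono hTG hfT, hall f hf⟩,
        T.not_isDiag_of_mem_edgeSet hfT⟩
    push_neg at hbad
    obtain ⟨f0, hf0p, hf0w⟩ := hbad
    have hf0T : f0 ∈ T.edgeSet := p.edges_subset_edgeSet hf0p
    have hf0G : f0 ∈ G.edgeSet := SimpleGraph.edgeSet_mono hTG hf0T
    have hne : f0 ≠ s(u, v) := fun h => heT (h ▸ hf0T)
    have hwlt : w f0 < w s(u, v) :=
      lt_of_le_of_ne hf0w
        (fun h => hne (hw hf0G ((SimpleGraph.mem_edgeSet G).mpr huv) h))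
    have hnot : ¬ (T \ SimpleGraph.fromEdgeSet {f0}).Reachable u v :=
      not_reachable_delete_of_mem_path_edges hTacyc hp hf0p
    clear hf0p hf0w hne
    induction f0 using Sym2.ind with
    | _ x y =>
      have hxy : T.Adj x y := (SimpleGraph.mem_edgeSet T).mp hf0T
      rcases reach_or hTconn x y u with hu' | hu' <;>
        rcases reach_or hTconn x y v with hv' | hv'
      · exact hnot (hu'.trans hv'.symm)
      · obtain ⟨T'', h1, h2, h3, h4⟩ :=
          improve hTG hTconn hTacyc w huv hxy heT hwlt hnot hu' hv'
        exact absurd (hmax T'' h1 h2 h3) (not_le.mpr h4)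
      · rw [Sym2.eq_swap (a := x) (b := y)] at hwlt hnot hu' hv'
        obtain ⟨T'', h1, h2, h3, h4⟩ :=
          improve hTG hTconn hTacyc w huv hxy.symm heT hwlt hnot hu' hv'
        exact absurd (hmax T'' h1 h2 h3) (not_le.mpr h4)
      · exact hnot (hu'.trans hv'.symm)
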